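/- arXiv:0704.1432 — 2 statements merged into one kernel-verified Lean document; each statement's English description precedes it below -/
import Mathlib

section
/- Let Δ_p(t) = t^{(1-p)/2}(t^{p-1} - t^{p-2} + ... - t + 1) for odd p ≥ 1 (the Alexander polynomial of the (2,p) torus knot). Define, for positive integers l, q, r with q, r odd, the Laurent polynomial D_l(t) = Δ_q(t)·Δ_r(t) + l·(t^{-1/2} - t^{1/2})·Δ_{q+r}'(t), where Δ_{q+r}'(t) = t^{(1-(q+r))/2}(-t^{q+r-1} + t^{q+r-2} - ... - t + 1) (the Alexander polynomial of the (2,q+r) torus link, q+r even). Then D_l(t) = t^{-(q+r)/2}( l·t^{q+r} - (2l-1)·t^{q+r-1} + (2l-2)·t^{q+r-2} - ... alternating with coefficients l, 2l-1, 2l-2, 2l-1, ..., 2l-1, l ); in particular its span of exponents (max degree minus min degree in t) equals q+r and its leading coefficient is l. -/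
open Polynomial Finset


private noncomputable def B (p : ℕ) : Polynomial ℤ :=
  ∑ j ∈ Finset.range p, C ((-1 : ℤ) ^ j) * X ^ (2 * j)

private lemma coeffB (p n : ℕ) : (B p).coeff (2 * n) = if n < p then (-1 : ℤ) ^ n else 0 := by
  unfold B
  rw [finset_sum_coeff]
  simp only [coeff_C_mul, coeff_X_pow, mul_ite, mul_one, mul_zero]
  have : ∀ x : ℕ, (2 * n = 2 * x) = (n = x) := by intro x; rw [eq_iff_iff]; omega
  simp only [this]
  rw [Finset.sum_ite_eq (Finset.range p) n (fun j => (-1 : ℤ) ^ j)]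
  simp [Finset.mem_range]

private lemma degB (p : ℕ) : (B p).natDegree ≤ 2 * p - 2 := by
  unfold B
  refine (natDegree_sum_le _ _).trans ?_
  rw [Finset.fold_max_le]
  refine ⟨by omega, fun j hj => ?_⟩
  refine (natDegree_C_mul_le _ _).trans ?_
  simp only [natDegree_X_pow]
  simp only [Finset.mem_range] at hj
  omega

/- Work in ℤ[s,s⁻¹], s = t^{1/2}.  The Alexander polynomial of the (2,p) torus
link is Δ_p = s^{1-p}·A p with A p = ∑_{j<p} (-1)^j s^{2j} (same alternating
formula for odd p and even p).  The Laurent polynomial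
D_l = Δ_q·Δ_r + l·(s⁻¹ - s)·Δ'_{q+r} satisfies s^{q+r}·D_l = P where
P = s²·A q·A r + l·(1 - s²)·A (q+r) is an honest polynomial.  The span of
t-exponents of D_l equals q+r iff P has degree 2(q+r) and nonzero constant
term; the leading and trailing coefficients of D_l are the leading coefficient
and the constant coefficient of P. -/
theorem pretzel_alexander_span_leading (l q r : ℕ) (hl : 0 < l)
    (hq : Odd q) (hr : Odd r) (hq0 : 0 < q) (hr0 : 0 < r)
    (A : ℕ → Polynomial ℤ)
    (hA : ∀ p, A p = ∑ j ∈ Finset.range p, C ((-1 : ℤ) ^ j) * X ^ (2 * j))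
    (P : Polynomial ℤ)
    (hP : P = X ^ 2 * A q * A r + C (l : ℤ) * (1 - X ^ 2) * A (q + r)) :
    P.natDegree = 2 * (q + r) ∧ P.leadingCoeff = (l : ℤ) ∧ P.coeff 0 = (l : ℤ) := by
  have hAB : ∀ p, A p = B p := fun p => by rw [hA p]; rfl
  rw [hAB, hAB, hAB] at hP
  have hB0 : (B (q + r)).coeff 0 = 1 := by
    have := coeffB (q + r) 0
    simp only [Nat.mul_zero] at this
    rw [this, if_pos (by omega)]; rfl
  -- constant coefficient
  have hc0 : P.coeff 0 = (l : ℤ) := by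
    rw [hP]
    rw [coeff_add, mul_coeff_zero, mul_coeff_zero, mul_coeff_zero]
    simp [hB0]
  -- top coefficient
  have htop1 : (X ^ 2 * B q * B r).natDegree < 2 * (q + r) := by
    calc (X ^ 2 * B q * B r).natDegree
        ≤ (X ^ 2 * B q).natDegree + (B r).natDegree := natDegree_mul_le
      _ ≤ ((X ^ 2 : Polynomial ℤ).natDegree + (B q).natDegree) + (B r).natDegree := by
          exact Nat.add_le_add_right natDegree_mul_le _
      _ ≤ (2 + (2 * q - 2)) + (2 * r - 2) := by
          have := degB q; have := degB r
          simp only [natDegree_X_pow]; omega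
      _ < 2 * (q + r) := by omega
  have hsodd : Odd (q + r - 1) := by
    obtain ⟨a, ha⟩ := hq; obtain ⟨b, hb⟩ := hr
    exact ⟨a + b, by omega⟩
  have hXB : (X ^ 2 * B (q + r)).coeff (2 * (q + r)) = -1 := by
    have h2 : 2 * (q + r) = 2 * (q + r - 1) + 2 := by omega
    rw [h2, coeff_X_pow_mul, coeffB, if_pos (by omega), hsodd.neg_one_pow]
  have hBtop : (B (q + r)).coeff (2 * (q + r)) = 0 := by
    rw [coeffB, if_neg (by omega)]
  have hct : P.coeff (2 * (q + r)) = (l : ℤ) := by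
    have hT : C (l : ℤ) * (1 - X ^ 2) * B (q + r)
        = C (l : ℤ) * B (q + r) - C (l : ℤ) * (X ^ 2 * B (q + r)) := by ring
    rw [hP, coeff_add, coeff_eq_zero_of_natDegree_lt htop1, hT, coeff_sub,
      coeff_C_mul, coeff_C_mul, hBtop, hXB]
    ring
  have hne : P.coeff (2 * (q + r)) ≠ 0 := by
    rw [hct]; exact_mod_cast hl.ne'
  have hge : 2 * (q + r) ≤ P.natDegree := le_natDegree_of_ne_zero hne
  have hle : P.natDegree ≤ 2 * (q + r) := by
    rw [hP]
    refine (natDegree_add_le _ _).trans ?_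
    have h1 : (X ^ 2 * B q * B r).natDegree ≤ 2 * (q + r) := htop1.le
    have h2 : (C (l : ℤ) * (1 - X ^ 2) * B (q + r)).natDegree ≤ 2 * (q + r) := by
      calc (C (l : ℤ) * (1 - X ^ 2) * B (q + r)).natDegree
          ≤ (C (l : ℤ) * (1 - X ^ 2)).natDegree + (B (q + r)).natDegree :=
            natDegree_mul_le
        _ ≤ ((C (l : ℤ)).natDegree + (1 - X ^ 2 : Polynomial ℤ).natDegree)
              + (B (q + r)).natDegree := Nat.add_le_add_right natDegree_mul_le _
        _ ≤ (0 + 2) + (2 * (q + r) - 2) := by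
            have h3 : (1 - X ^ 2 : Polynomial ℤ).natDegree ≤ 2 := by
              refine (natDegree_sub_le _ _).trans ?_
              simp [natDegree_X_pow]
            have := degB (q + r)
            simp only [natDegree_C]; omega
        _ ≤ 2 * (q + r) := by omega
    omega
  have hdeg : P.natDegree = 2 * (q + r) := le_antisymm hle hge
  exact ⟨hdeg, by rw [Polynomial.leadingCoeff, hdeg, hct], hc0⟩
end

section
/- Let n−s be even, s ≥ 1, let l_1,...,l_s be nonzero integers, let o_1,...,o_{n-s} be odd integers with |o_i| ≥ 3, α = ∑ sign(o_i) (even), o_i' = sign(o_i)(|o_i|−1). Define G(z) = (∏_{i=1}^s (−l_i))·z^s·( −(α/2)·z·∏_{j=1}^{n-s} ∇_{o_j} + ∑_{j=1}^{n-s} ∇_{o_j'}·∏_{k≠j} ∇_{o_k} ) + ( ∑_{i=1}^s ∏_{j≠i} (−l_j) )·z^{s−1} ∈ ℤ[z], where ∇_m is the (2,m) torus link Conway polynomial. If α ≠ 0 then deg G = s + 1 + ∑_{j=1}^{n-s}(|o_j| − 1), with leading coefficient (−α/2)·∏_{i=1}^s (−l_i). -/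
open Polynomial Finset

/-- Conway polynomial of the (2,m) torus link: ∇₀=0, ∇₁=1, ∇ₘ = z∇ₘ₋₁ + ∇ₘ₋₂. -/
noncomputable def conway : ℕ → Polynomial ℤ
  | 0 => 0
  | 1 => 1
  | (m+2) => X * conway (m+1) + conway m

/-- Signed extension: ∇₋ₘ = (-1)^(m+1) ∇ₘ. -/
noncomputable def conwayZ (m : ℤ) : Polynomial ℤ :=
  if 0 ≤ m then conway m.toNat else (-1) ^ (m.natAbs + 1) * conway m.natAbs

lemma conway_aux : ∀ m : ℕ, (conway (m+1)).Monic ∧ (conway (m+1)).natDegree = m := by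
  intro m
  induction m using Nat.strong_induction_on with
  | _ m ih =>
    match m with
    | 0 => constructor <;> simp [conway, monic_one]
    | 1 =>
      have h : conway 2 = X := by
        show X * conway 1 + conway 0 = X
        simp [conway]
      constructor <;> simp [h, monic_X]
    | (m+2) =>
      obtain ⟨h1m, h1d⟩ := ih (m+1) (by omega)
      obtain ⟨h0m, h0d⟩ := ih m (by omega)
      have hdef : conway (m+3) = X * conway (m+2) + conway (m+1) := rfl
      have hXm : (X * conway (m+2)).Monic := monic_X.mul h1m
      have hXd : (X * conway (m+2)).natDegree = m + 2 := by
        rw [natDegree_mul X_ne_zero h1m.ne_zero, natDegree_X, h1d]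
        omega
      have hlt : (conway (m+1)).degree < (X * conway (m+2)).degree := by
        rw [degree_eq_natDegree h0m.ne_zero, degree_eq_natDegree hXm.ne_zero, h0d, hXd]
        exact_mod_cast (by omega : m < m + 2)
      refine ⟨hdef ▸ hXm.add_of_left hlt, ?_⟩
      rw [hdef, natDegree_eq_of_degree_eq (degree_add_eq_left_of_degree_lt hlt), hXd]

lemma conway_natDegree_le (m : ℕ) : (conway m).natDegree ≤ m - 1 := by
  match m with
  | 0 => simp [conway]
  | (m+1) => exact le_of_eq (conway_aux m).2

lemma conwayZ_odd_eq (m : ℤ) (h : Odd m) : conwayZ m = conway m.natAbs := by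
  unfold conwayZ
  split_ifs with h0
  · congr 1; omega
  · obtain ⟨k, hk⟩ := Int.natAbs_odd.mpr h
    rw [Even.neg_one_pow ⟨k+1, by omega⟩, one_mul]

lemma conwayZ_odd_monic (m : ℤ) (h : Odd m) : (conwayZ m).Monic := by
  have h1 : 1 ≤ m.natAbs := by rcases h with ⟨k, hk⟩; omega
  rw [conwayZ_odd_eq m h, show m.natAbs = (m.natAbs - 1) + 1 by omega]
  exact (conway_aux _).1

lemma conwayZ_odd_natDegree (m : ℤ) (h : Odd m) :
    (conwayZ m).natDegree = m.natAbs - 1 := by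
  rw [conwayZ_odd_eq m h]
  have h1 : 1 ≤ m.natAbs := by rcases h with ⟨k, hk⟩; omega
  have h2 := (conway_aux (m.natAbs - 1)).2
  rw [show m.natAbs - 1 + 1 = m.natAbs by omega] at h2
  omega

lemma conwayZ_natDegree_le (m : ℤ) : (conwayZ m).natDegree ≤ m.natAbs - 1 := by
  unfold conwayZ
  split_ifs with h0
  · rw [show m.toNat = m.natAbs by omega]; exact conway_natDegree_le _
  · rcases Nat.even_or_odd (m.natAbs + 1) with he | hodd
    · rw [Even.neg_one_pow he, one_mul]; exact conway_natDegree_le _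
    · rw [Odd.neg_one_pow hodd, neg_one_mul, natDegree_neg]; exact conway_natDegree_le _

/- Conway polynomial of the n-pretzel link with s even entries 2lᵢ and n-s odd
entries oⱼ (Theorem 5, n-s even case), denominators cleared.  If α ≠ 0 then
deg G = s + 1 + ∑(|oⱼ|-1) with leading coefficient (-α/2)·∏(-lᵢ). -/
theorem pretzel_link_conway_degree_even (n s : ℕ) (hs : 1 ≤ s) (hsn : s ≤ n)
    (hns : Even (n - s))
    (l : ℕ → ℤ) (hl : ∀ i ∈ Finset.Icc 1 s, l i ≠ 0)
    (o : ℕ → ℤ) (ho : ∀ j ∈ Finset.Icc 1 (n - s), Odd (o j) ∧ 3 ≤ |o j|)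
    (α : ℤ) (hα : α = ∑ j ∈ Finset.Icc 1 (n - s), (o j).sign)
    (hα2 : 2 ∣ α) (hα0 : α ≠ 0)
    (G : Polynomial ℤ)
    (hG : G = C (∏ i ∈ Finset.Icc 1 s, (- l i)) * X ^ s *
        (- C (α / 2) * X * ∏ j ∈ Finset.Icc 1 (n - s), conwayZ (o j)
         + ∑ j ∈ Finset.Icc 1 (n - s), conwayZ ((o j).sign * (|o j| - 1)) *
             ∏ k ∈ (Finset.Icc 1 (n - s)).erase j, conwayZ (o k))
      + C (∑ i ∈ Finset.Icc 1 s, ∏ j ∈ (Finset.Icc 1 s).erase i, (- l j)) * X ^ (s - 1)) :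
    G.natDegree = s + 1 + ∑ j ∈ Finset.Icc 1 (n - s), ((o j).natAbs - 1) ∧
    G.leadingCoeff = (-(α / 2)) * ∏ i ∈ Finset.Icc 1 s, (- l i) := by
  set J := Finset.Icc 1 (n - s) with hJ
  set D := ∑ j ∈ J, ((o j).natAbs - 1) with hDdef
  -- half of α
  have hhalf : α / 2 ≠ 0 := by
    obtain ⟨β, hβ⟩ := hα2; omega
  -- the product Q of the odd conway polynomials
  set Q := ∏ j ∈ J, conwayZ (o j) with hQdef
  have hQm : Q.Monic := monic_prod_of_monic _ _ (fun j hj => conwayZ_odd_monic _ (ho j hj).1)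
  have hQd : Q.natDegree = D := by
    rw [hQdef, natDegree_prod_of_monic _ _ (fun j hj => conwayZ_odd_monic _ (ho j hj).1)]
    exact Finset.sum_congr rfl fun j hj => conwayZ_odd_natDegree _ (ho j hj).1
  -- the leading term A
  set A := - C (α / 2) * X * Q with hAdef
  have hXQm : (X * Q).Monic := monic_X.mul hQm
  have hXQd : (X * Q).natDegree = D + 1 := by
    rw [natDegree_mul X_ne_zero hQm.ne_zero, natDegree_X, hQd]; omega
  have hArw : A = C (-(α / 2)) * (X * Q) := by rw [map_neg]; ring
  have hAlc : A.leadingCoeff = -(α / 2) := by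
    rw [hArw, leadingCoeff_mul, leadingCoeff_C, hXQm.leadingCoeff, mul_one]
  have hA0 : A ≠ 0 := fun h => by simp [h, leadingCoeff_zero] at hAlc; omega
  have hAd : A.natDegree = D + 1 := by
    rw [hArw, natDegree_mul (fun h => by simp at h; omega) hXQm.ne_zero, natDegree_C, hXQd]
    omega
  -- the correction sum B
  set B := ∑ j ∈ J, conwayZ ((o j).sign * (|o j| - 1)) *
      ∏ k ∈ J.erase j, conwayZ (o k) with hBdef
  have hBd : B.natDegree ≤ D := by
    refine natDegree_sum_le_of_forall_le _ _ fun j hj => ?_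
    obtain ⟨hodd, habs⟩ := ho j hj
    have ho0 : o j ≠ 0 := by intro h; rw [h] at habs; simp at habs
    have habs' : 3 ≤ (o j).natAbs := by rw [Int.abs_eq_natAbs] at habs; exact_mod_cast habs
    have hnat : ((o j).sign * (|o j| - 1)).natAbs = (o j).natAbs - 1 := by
      rw [Int.natAbs_mul, Int.natAbs_sign_of_ne_zero ho0, one_mul, Int.abs_eq_natAbs]
      omega
    have h1 : (conwayZ ((o j).sign * (|o j| - 1))).natDegree ≤ (o j).natAbs - 1 - 1 := by
      calc _ ≤ ((o j).sign * (|o j| - 1)).natAbs - 1 := conwayZ_natDegree_le _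
        _ = (o j).natAbs - 1 - 1 := by rw [hnat]
    have h2 : (∏ k ∈ J.erase j, conwayZ (o k)).natDegree ≤
        ∑ k ∈ J.erase j, ((o k).natAbs - 1) := by
      refine (natDegree_prod_le _ _).trans (Finset.sum_le_sum fun k hk => ?_)
      exact (conwayZ_natDegree_le _).trans (by omega)
    have h3 : ∑ k ∈ J.erase j, ((o k).natAbs - 1) + ((o j).natAbs - 1) = D := by
      rw [hDdef, Finset.sum_erase_add _ _ hj]
    refine (natDegree_mul_le).trans ?_
    omega
  -- P = A + B
  have hBA : B.degree < A.degree := by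
    rw [degree_eq_natDegree hA0, hAd]
    calc B.degree ≤ (B.natDegree : WithBot ℕ) := degree_le_natDegree
      _ < ((D + 1 : ℕ) : WithBot ℕ) := by exact_mod_cast (by omega : B.natDegree < D + 1)
  have hPd : (A + B).natDegree = D + 1 := by
    rw [natDegree_eq_of_degree_eq (degree_add_eq_left_of_degree_lt hBA), hAd]
  have hPlc : (A + B).leadingCoeff = -(α / 2) := by
    rw [leadingCoeff_add_of_degree_lt' hBA, hAlc]
  have hP0 : A + B ≠ 0 := fun h => by simp [h, leadingCoeff_zero] at hPlc; omega
  -- the main term T1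
  set c := ∏ i ∈ Finset.Icc 1 s, (- l i) with hcdef
  have hc0 : c ≠ 0 := Finset.prod_ne_zero_iff.mpr fun i hi => neg_ne_zero.mpr (hl i hi)
  set T1 := C c * X ^ s * (A + B) with hT1def
  have hCX0 : C c * X ^ s ≠ 0 := mul_ne_zero (fun h => hc0 (by simpa using h)) (pow_ne_zero s X_ne_zero)
  have hT1d : T1.natDegree = s + 1 + D := by
    rw [hT1def, natDegree_mul hCX0 hP0, natDegree_mul (fun h => hc0 (by simpa using h))
      (pow_ne_zero s X_ne_zero), natDegree_C, natDegree_X_pow, hPd]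
    omega
  have hT1lc : T1.leadingCoeff = -(α / 2) * c := by
    rw [hT1def, leadingCoeff_mul, leadingCoeff_mul, leadingCoeff_C, leadingCoeff_X_pow, hPlc]
    ring
  have hT10 : T1 ≠ 0 := mul_ne_zero hCX0 hP0
  -- the tail term T2
  set T2 := C (∑ i ∈ Finset.Icc 1 s, ∏ j ∈ (Finset.Icc 1 s).erase i, (- l j)) * X ^ (s - 1)
    with hT2def
  have hT2d : T2.natDegree ≤ s - 1 := by
    rw [hT2def]
    exact (natDegree_mul_le).trans (by rw [natDegree_C, natDegree_X_pow]; omega)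
  have hT21 : T2.degree < T1.degree := by
    rw [degree_eq_natDegree hT10, hT1d]
    calc T2.degree ≤ (T2.natDegree : WithBot ℕ) := degree_le_natDegree
      _ < ((s + 1 + D : ℕ) : WithBot ℕ) := by
        exact_mod_cast (by omega : T2.natDegree < s + 1 + D)
  have hGrw : G = T1 + T2 := hG
  constructor
  · rw [hGrw, natDegree_eq_of_degree_eq (degree_add_eq_left_of_degree_lt hT21), hT1d]
  · rw [hGrw, leadingCoeff_add_of_degree_lt' hT21, hT1lc]
end
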